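/- Let K be an algebraically closed field and Λ a finite-dimensional K-algebra. Every Λ-module X is a pure submodule of the direct product of its finite-dimensional quotient modules: the canonical map from X to the product over all submodules U ⊆ X of finite codimension of the quotients X/U is injective, and its image is a pure submodule of the product. -/

import Mathlib

universe u

open scoped DirectSum

/-- A module `M` over `Λ` is indecomposable if it is nonzero and any direct sum
decomposition of `M` has a zero summand. -/
def IsIndecomposableModule (Λ : Type u) [Ring Λ] (M : ModuleCat.{u} Λ) : Prop :=
  (∃ x : M, x ≠ 0) ∧
    ∀ M₁ M₂ : ModuleCat.{u} Λ,
      Nonempty ((M : Type u) ≃ₗ[Λ] Prod (M₁ : Type u) (M₂ : Type u)) →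
        (∀ x : M₁, x = 0) ∨ (∀ x : M₂, x = 0)

/-- A `Λ`-module is finite-dimensional if it is finite-dimensional as a `K`-vector space
(via restriction of scalars along `K → Λ`). -/
def IsFinDimModule (K Λ : Type u) [Field K] [Ring Λ] [Algebra K Λ]
    (M : ModuleCat.{u} Λ) : Prop :=
  @FiniteDimensional K (RestrictScalars K Λ M) _ _ (RestrictScalars.module K Λ M)

/-- A torsion class in `Mod Λ`: a class of modules closed under isomorphisms, arbitrary
direct sums, quotients and extensions. -/
def IsTorsionClass (Λ : Type u) [Ring Λ] (T : Set (ModuleCat.{u} Λ)) : Prop :=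
  (∀ M N : ModuleCat.{u} Λ, Nonempty ((M : Type u) ≃ₗ[Λ] (N : Type u)) → M ∈ T → N ∈ T) ∧
  (∀ (ι : Type u) (F : ι → ModuleCat.{u} Λ), (∀ i, F i ∈ T) →
      ModuleCat.of Λ (⨁ i, (F i : Type u)) ∈ T) ∧
  (∀ M N : ModuleCat.{u} Λ, M ∈ T →
      (∃ p : (M : Type u) →ₗ[Λ] (N : Type u), Function.Surjective p) → N ∈ T) ∧
  (∀ A B C : ModuleCat.{u} Λ, A ∈ T → C ∈ T →
      (∃ (f : (A : Type u) →ₗ[Λ] (B : Type u)) (g : (B : Type u) →ₗ[Λ] (C : Type u)),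
        Function.Injective f ∧ Function.Surjective g ∧ LinearMap.range f = LinearMap.ker g) →
      B ∈ T)

/-- A torsion class in `mod Λ` (finite-dimensional modules): a class of finite-dimensional
modules closed under isomorphisms, finite direct sums, quotients and extensions. -/
def IsSmallTorsionClass (K Λ : Type u) [Field K] [Ring Λ] [Algebra K Λ]
    (U : Set (ModuleCat.{u} Λ)) : Prop :=
  (∀ M ∈ U, IsFinDimModule K Λ M) ∧
  (∀ M N : ModuleCat.{u} Λ, Nonempty ((M : Type u) ≃ₗ[Λ] (N : Type u)) → M ∈ U → N ∈ U) ∧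
  (∀ (n : ℕ) (F : Fin n → ModuleCat.{u} Λ), (∀ i, F i ∈ U) →
      ModuleCat.of Λ (⨁ i, (F i : Type u)) ∈ U) ∧
  (∀ M N : ModuleCat.{u} Λ, M ∈ U →
      (∃ p : (M : Type u) →ₗ[Λ] (N : Type u), Function.Surjective p) → N ∈ U) ∧
  (∀ A B C : ModuleCat.{u} Λ, A ∈ U → C ∈ U →
      (∃ (f : (A : Type u) →ₗ[Λ] (B : Type u)) (g : (B : Type u) →ₗ[Λ] (C : Type u)),
        Function.Injective f ∧ Function.Surjective g ∧ LinearMap.range f = LinearMap.ker g) →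
      B ∈ U)

/-- A torsion pair in `Mod Λ`. -/
def IsTorsionPair (Λ : Type u) [Ring Λ] (T F : Set (ModuleCat.{u} Λ)) : Prop :=
  (∀ A ∈ T, ∀ B ∈ F, ∀ φ : (A : Type u) →ₗ[Λ] (B : Type u), φ = 0) ∧
  (∀ X : ModuleCat.{u} Λ,
    ∃ (A B : ModuleCat.{u} Λ) (i : (A : Type u) →ₗ[Λ] (X : Type u))
      (p : (X : Type u) →ₗ[Λ] (B : Type u)),
      A ∈ T ∧ B ∈ F ∧ Function.Injective i ∧ Function.Surjective p ∧
        LinearMap.range i = LinearMap.ker p)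

/-- A torsion pair in `mod Λ` (finite-dimensional modules). -/
def IsSmallTorsionPair (K Λ : Type u) [Field K] [Ring Λ] [Algebra K Λ]
    (U V : Set (ModuleCat.{u} Λ)) : Prop :=
  (∀ M ∈ U, IsFinDimModule K Λ M) ∧ (∀ M ∈ V, IsFinDimModule K Λ M) ∧
  (∀ A ∈ U, ∀ B ∈ V, ∀ φ : (A : Type u) →ₗ[Λ] (B : Type u), φ = 0) ∧
  (∀ X : ModuleCat.{u} Λ, IsFinDimModule K Λ X →
    ∃ (A B : ModuleCat.{u} Λ) (i : (A : Type u) →ₗ[Λ] (X : Type u))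
      (p : (X : Type u) →ₗ[Λ] (B : Type u)),
      A ∈ U ∧ B ∈ V ∧ Function.Injective i ∧ Function.Surjective p ∧
        LinearMap.range i = LinearMap.ker p)

/-- `Gen M`: the class of modules which are quotients of (possibly infinite) direct sums
of copies of `M`. -/
def GenClass (Λ : Type u) [Ring Λ] (M : ModuleCat.{u} Λ) : Set (ModuleCat.{u} Λ) :=
  {X | ∃ (ι : Type u) (p : (ι →₀ (M : Type u)) →ₗ[Λ] (X : Type u)), Function.Surjective p}

/-- `Gen U` for a class `U`: quotients of direct sums of modules in `U`. -/
def GenClassOfSet (Λ : Type u) [Ring Λ] (U : Set (ModuleCat.{u} Λ)) :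
    Set (ModuleCat.{u} Λ) :=
  {X | ∃ (ι : Type u) (F : ι → ModuleCat.{u} Λ)
        (p : (⨁ i, (F i : Type u)) →ₗ[Λ] (X : Type u)),
        (∀ i, F i ∈ U) ∧ Function.Surjective p}

/-- `gen M`: the class of finite-dimensional modules which are quotients of finite direct
sums of copies of `M`. -/
def SmallGenClass (K Λ : Type u) [Field K] [Ring Λ] [Algebra K Λ]
    (M : ModuleCat.{u} Λ) : Set (ModuleCat.{u} Λ) :=
  {X | IsFinDimModule K Λ X ∧
        ∃ (n : ℕ) (p : (Fin n → (M : Type u)) →ₗ[Λ] (X : Type u)), Function.Surjective p}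

/-- `U^⊥`: the class of modules receiving no nonzero map from members of `U`. -/
def PerpClass (Λ : Type u) [Ring Λ] (U : Set (ModuleCat.{u} Λ)) : Set (ModuleCat.{u} Λ) :=
  {Y | ∀ A ∈ U, ∀ φ : (A : Type u) →ₗ[Λ] (Y : Type u), φ = 0}

/-- `lim U`: the class of modules which are direct limits (filtered colimits) of directed
systems of modules in `U`. -/
def LimClass (Λ : Type u) [Ring Λ] (U : Set (ModuleCat.{u} Λ)) : Set (ModuleCat.{u} Λ) :=
  {X | ∃ (ι : Type u) (r : ι → ι → Prop),
    Nonempty ι ∧ (∀ i, r i i) ∧ (∀ i j k, r i j → r j k → r i k) ∧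
    (∀ i j, ∃ k, r i k ∧ r j k) ∧
    ∃ (F : ι → ModuleCat.{u} Λ)
      (f : ∀ i j, r i j → ((F i : Type u) →ₗ[Λ] (F j : Type u)))
      (g : ∀ i, (F i : Type u) →ₗ[Λ] (X : Type u)),
      (∀ i, F i ∈ U) ∧
      (∀ i (h : r i i), f i i h = LinearMap.id) ∧
      (∀ i j k (hij : r i j) (hjk : r j k) (hik : r i k),
          (f j k hjk).comp (f i j hij) = f i k hik) ∧
      (∀ i j (h : r i j), (g j).comp (f i j h) = g i) ∧
      (∀ x : X, ∃ i y, g i y = x) ∧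
      (∀ i (y : F i), g i y = 0 → ∃ (j : ι) (h : r i j), f i j h y = 0)}

/-- Purity of a submodule, via the standard characterisation by finite systems of linear
equations (equivalent to injectivity of `Z ⊗ Y → Z ⊗ X` for all right modules `Z`). -/
def IsPureSubmodule (Λ : Type u) [Ring Λ] {X : Type u} [AddCommGroup X] [Module Λ X]
    (Y : Submodule Λ X) : Prop :=
  ∀ (m n : ℕ) (a : Fin m → Fin n → Λ) (y : Fin m → Y),
    (∃ x : Fin n → X, ∀ i, ∑ j, a i j • x j = (y i : X)) →
    ∃ x' : Fin n → Y, ∀ i, ∑ j, a i j • (x' j : X) = (y i : X)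

attribute [local instance] RestrictScalars.moduleOrig

noncomputable instance rsModuleG (K Λ M : Type u) [Field K] [Ring Λ] [Algebra K Λ]
    [AddCommGroup M] [Module Λ M] :
    @Module K (RestrictScalars K Λ M) _ AddCommGroup.toAddCommMonoid :=
  RestrictScalars.module K Λ M

section Aux

variable (K : Type u) [Field K] (Λ : Type u) [Ring Λ] [Algebra K Λ]
variable {M : Type u} [AddCommGroup M] [Module Λ M]

lemma rs_smul_comm (k : K) (r : Λ) (x : RestrictScalars K Λ M) :
    r • (k • x) = k • (r • x) := by
  rw [← algebraMap_smul Λ k x, ← algebraMap_smul Λ k (r • x), ← mul_smul, ← mul_smul,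
    Algebra.commutes]

/-- Lift a `K`-linear map vanishing on a `Λ`-submodule `U` to the quotient. -/
noncomputable def liftRS (U : Submodule Λ M) {V : Type u} [AddCommGroup V] [Module K V]
    (g : RestrictScalars K Λ M →ₗ[K] V) (h : ∀ x ∈ U, g x = 0) :
    RestrictScalars K Λ (M ⧸ U) →ₗ[K] V where
  toFun q := Quotient.liftOn' (α := M) (s₁ := Submodule.quotientRel U) q (fun x => g x)
    (fun x y hxy => by
      have hmem : x - y ∈ U := (Submodule.quotientRel_def U).mp hxy
      have h2 : g x - g y = 0 := (map_sub g x y).symm.trans (h _ hmem)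
      exact sub_eq_zero.mp h2)
  map_add' q₁ q₂ := by
    obtain ⟨x, rfl⟩ := Submodule.Quotient.mk_surjective U q₁
    obtain ⟨y, rfl⟩ := Submodule.Quotient.mk_surjective U q₂
    show Quotient.liftOn' (Submodule.Quotient.mk (p := U) (x + y)) _ _ = _
    exact map_add g x y
  map_smul' k q := by
    obtain ⟨x, rfl⟩ := Submodule.Quotient.mk_surjective U q
    have hsm : (k • (show RestrictScalars K Λ (M ⧸ U) from Submodule.Quotient.mk x)) =
        Submodule.Quotient.mk (p := U) (algebraMap K Λ k • x) := rfl
    rw [hsm]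
    exact map_smul g k (show RestrictScalars K Λ M from x)

@[simp] lemma liftRS_mk (U : Submodule Λ M) {V : Type u} [AddCommGroup V] [Module K V]
    (g : RestrictScalars K Λ M →ₗ[K] V) (h : ∀ x ∈ U, g x = 0) (x : M) :
    liftRS K Λ U g h (Submodule.Quotient.mk x) = g x := rfl

variable [FiniteDimensional K Λ]

/-- The `K`-linear map `x ↦ (i ↦ (r ↦ φ i (r • x)))` into a finite-dimensional space. -/
noncomputable def Gmap {N : ℕ} (φ : Fin N → (RestrictScalars K Λ M →ₗ[K] K)) :
    RestrictScalars K Λ M →ₗ[K] (Fin N → (Λ →ₗ[K] K)) where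
  toFun x i :=
    { toFun := fun r => φ i (r • x)
      map_add' := fun r s => by
        show φ i ((r + s) • x) = _
        rw [add_smul, map_add]
      map_smul' := fun k r => by
        show φ i ((k • r) • x) = k • φ i (r • x)
        rw [smul_assoc, map_smul] }
  map_add' x y := by
    funext i
    ext r
    show φ i (r • (x + y)) = φ i (r • x) + φ i (r • y)
    rw [smul_add, map_add]
  map_smul' k x := by
    funext i
    ext r
    show φ i (r • (k • x)) = k • φ i (r • x)
    rw [rs_smul_comm, map_smul]

/-- The joint "kernel" of a finite family of functionals under all translates:
a `Λ`-submodule of finite codimension. -/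
def Uphi {N : ℕ} (φ : Fin N → (RestrictScalars K Λ M →ₗ[K] K)) : Submodule Λ M where
  carrier := {x : M | ∀ (i : Fin N) (r : Λ), φ i (r • x) = 0}
  add_mem' := by
    intro a b ha hb i r
    show φ i (r • (a + b)) = 0
    rw [smul_add]
    erw [map_add]
    rw [ha i r, hb i r, add_zero]
  zero_mem' := by
    intro i r
    show φ i (r • (0 : RestrictScalars K Λ M)) = 0
    rw [smul_zero, map_zero]
  smul_mem' := by
    intro c x hx i r
    show φ i (r • c • (show RestrictScalars K Λ M from x)) = 0
    rw [← mul_smul]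
    exact hx i (r * c)

lemma mem_Uphi {N : ℕ} (φ : Fin N → (RestrictScalars K Λ M →ₗ[K] K)) (x : M) :
    x ∈ Uphi K Λ φ ↔ ∀ (i : Fin N) (r : Λ), φ i (r • x) = 0 := Iff.rfl

lemma findim_quot {N : ℕ} (φ : Fin N → (RestrictScalars K Λ M →ₗ[K] K)) :
    FiniteDimensional K (RestrictScalars K Λ (M ⧸ Uphi K Λ φ)) := by
  have h : ∀ x ∈ Uphi K Λ φ, Gmap K Λ φ x = 0 := by
    intro x hx
    funext i
    ext r
    exact hx i r
  have hinj : Function.Injective (liftRS K Λ (Uphi K Λ φ) (Gmap K Λ φ) h) := by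
    rw [injective_iff_map_eq_zero]
    intro q hq
    obtain ⟨x, rfl⟩ := Submodule.Quotient.mk_surjective _ q
    rw [liftRS_mk] at hq
    have hx : x ∈ Uphi K Λ φ := by
      intro i r
      exact congrFun (congrFun (congrArg (fun f => fun i r => f i r) hq) i) r
    exact (Submodule.Quotient.mk_eq_zero _).mpr hx
  exact FiniteDimensional.of_injective (liftRS K Λ (Uphi K Λ φ) (Gmap K Λ φ) h) hinj

/-- Separation: an element in every finite-codimensional submodule is zero. -/
lemma eq_zero_of_forall_mem (x : M)
    (h : ∀ U : Submodule Λ M,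
      FiniteDimensional K (RestrictScalars K Λ (M ⧸ U)) → x ∈ U) : x = 0 := by
  have hd : ∀ φ : Module.Dual K (RestrictScalars K Λ M), φ x = 0 := by
    intro φ
    have hU := h (Uphi K Λ (fun _ : Fin 1 => φ)) (findim_quot K Λ _)
    have h1 := hU 0 1
    rwa [one_smul] at h1
  haveI : Module.Projective K (RestrictScalars K Λ M) :=
    @Module.Projective.of_free K _ _ _ _ (Module.Free.of_divisionRing K (RestrictScalars K Λ M))
  exact (Module.forall_dual_apply_eq_zero_iff K (show RestrictScalars K Λ M from x)).mp hd

end Aux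

/-- Every module over a finite-dimensional algebra is a pure submodule of the product of
its finite-dimensional quotients: the canonical map to the product of all quotients by
submodules of finite codimension is injective with pure image. -/
theorem pure_embedding_in_product_of_finite_dimensional_quotients
    (K : Type u) [Field K] [IsAlgClosed K]
    (Λ : Type u) [Ring Λ] [Algebra K Λ] [FiniteDimensional K Λ]
    (X : Type u) [AddCommGroup X] [Module Λ X] :
    Function.Injective
      (LinearMap.pi
        (fun U : {U : Submodule Λ X // @FiniteDimensional K (RestrictScalars K Λ (X ⧸ U)) _ _
            (RestrictScalars.module K Λ (X ⧸ U))} =>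
          U.val.mkQ)) ∧
    IsPureSubmodule Λ
      (LinearMap.range
        (LinearMap.pi
          (fun U : {U : Submodule Λ X // @FiniteDimensional K (RestrictScalars K Λ (X ⧸ U)) _ _
            (RestrictScalars.module K Λ (X ⧸ U))} =>
            U.val.mkQ))) := by
  classical
  set Φ := LinearMap.pi
      (fun U : {U : Submodule Λ X // @FiniteDimensional K (RestrictScalars K Λ (X ⧸ U)) _ _
            (RestrictScalars.module K Λ (X ⧸ U))} =>
        U.val.mkQ) with hΦ
  have hinj : Function.Injective Φ := by
    intro x₁ x₂ hx
    have hz : x₁ - x₂ = 0 := by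
      refine eq_zero_of_forall_mem K Λ _ (fun U hU => ?_)
      have hc := congrFun hx ⟨U, hU⟩
      rw [hΦ, LinearMap.pi_apply, LinearMap.pi_apply] at hc
      have h0 : U.mkQ (x₁ - x₂) = 0 := by rw [map_sub, hc, sub_self]
      rwa [Submodule.mkQ_apply, Submodule.Quotient.mk_eq_zero] at h0
    exact sub_eq_zero.mp hz
  refine ⟨hinj, ?_⟩
  intro m n a y hex
  obtain ⟨x, hx⟩ := hex
  have hy : ∀ i, ∃ bi : X, Φ bi = (y i : _) := fun i => LinearMap.mem_range.mp (y i).2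
  choose b hb using hy
  by_cases hsol : ∃ c : Fin n → X, ∀ i, ∑ j, a i j • c j = b i
  · obtain ⟨c, hc⟩ := hsol
    refine ⟨fun j => ⟨Φ (c j), LinearMap.mem_range_self _ _⟩, fun i => ?_⟩
    show ∑ j, a i j • Φ (c j) = (y i : _)
    rw [← hb i, ← hc i, map_sum]
    exact Finset.sum_congr rfl fun j _ => (map_smul Φ (a i j) (c j)).symm
  · exfalso
    set L : (Fin n → RestrictScalars K Λ X) →ₗ[K] (Fin m → RestrictScalars K Λ X) :=
      { toFun := fun c i => ∑ j, a i j • c j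
        map_add' := by
          intro c d
          funext i
          show ∑ j, a i j • (c j + d j) = (∑ j, a i j • c j) + ∑ j, a i j • d j
          rw [← Finset.sum_add_distrib]
          exact Finset.sum_congr rfl fun j _ => smul_add _ _ _
        map_smul' := by
          intro k c
          funext i
          show ∑ j, a i j • (k • c j) = k • ∑ j, a i j • c j
          rw [Finset.smul_sum]
          exact Finset.sum_congr rfl fun j _ => rs_smul_comm K Λ k (a i j) (c j) } with hL
    set W := LinearMap.range L with hW
    have hbW : (show Fin m → RestrictScalars K Λ X from b) ∉ W := by
      rintro ⟨c, hcL⟩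
      exact hsol ⟨c, fun i => congrFun hcL i⟩
    have hne : Submodule.Quotient.mk (p := W) (show Fin m → RestrictScalars K Λ X from b) ≠ 0 := by
      exact fun h0 => hbW ((Submodule.Quotient.mk_eq_zero _).mp h0)
    have hpsi : ¬ ∀ ψ : Module.Dual K ((Fin m → RestrictScalars K Λ X) ⧸ W),
        ψ (Submodule.Quotient.mk (p := W) (show Fin m → RestrictScalars K Λ X from b)) = 0 := by
      rw [Module.forall_dual_apply_eq_zero_iff]
      exact hne
    push_neg at hpsi
    obtain ⟨ψ, hψ⟩ := hpsi
    set lam0 : (Fin m → RestrictScalars K Λ X) →ₗ[K] K := ψ.comp W.mkQ with hlam0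
    have hlamW : ∀ c : Fin n → RestrictScalars K Λ X, lam0 (L c) = 0 := by
      intro c
      have hz : W.mkQ (L c) = 0 := by
        rw [Submodule.mkQ_apply, Submodule.Quotient.mk_eq_zero]
        exact LinearMap.mem_range_self _ _
      show ψ (W.mkQ (L c)) = 0
      rw [hz, map_zero]
    have hlamb : lam0 (show Fin m → RestrictScalars K Λ X from b) ≠ 0 := hψ
    set lam : Fin m → (RestrictScalars K Λ X →ₗ[K] K) :=
      fun i => lam0.comp (LinearMap.single K (fun _ : Fin m => RestrictScalars K Λ X) i) with hlam
    have hsum : ∀ v : Fin m → RestrictScalars K Λ X, lam0 v = ∑ i, lam i (v i) := by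
      intro v
      conv_lhs => rw [← Finset.univ_sum_single v]
      rw [map_sum]
      rfl
    have horth : ∀ (j : Fin n) (z : X), ∑ i, lam i (a i j • z) = 0 := by
      intro j z
      have h0 := hlamW (Pi.single j (show RestrictScalars K Λ X from z))
      rw [hsum] at h0
      rw [← h0]
      refine Finset.sum_congr rfl fun i _ => ?_
      congr 1
      show a i j • z = ∑ j', a i j' • Pi.single j (show RestrictScalars K Λ X from z) j'
      rw [Finset.sum_eq_single j]
      · rw [Pi.single_eq_same]
      · intro j' _ hj'
        rw [Pi.single_eq_of_ne hj', smul_zero]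
      · intro hj
        exact absurd (Finset.mem_univ j) hj
    set U := Uphi K Λ (M := X) lam with hU
    have hUfd : FiniteDimensional K (RestrictScalars K Λ (X ⧸ U)) := findim_quot K Λ lam
    set lbar : Fin m → (RestrictScalars K Λ (X ⧸ U) →ₗ[K] K) :=
      fun i => liftRS K Λ U (lam i)
        (fun z hz => by have h1 := hz i 1; rwa [one_smul] at h1) with hlbar
    have hcoord : ∀ i, (Submodule.Quotient.mk (p := U) (b i) : X ⧸ U)
        = ∑ j, a i j • (x j ⟨U, hUfd⟩) := by
      intro i
      have hc := congrFun (hx i) ⟨U, hUfd⟩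
      have hc2 := congrFun (hb i) ⟨U, hUfd⟩
      have hc3 : Submodule.Quotient.mk (p := U) (b i) = (∑ j, a i j • x j) ⟨U, hUfd⟩ := by
        rw [hc]
        exact hc2
      rw [hc3]
      simp [Finset.sum_apply, Pi.smul_apply]
    have hmu : ∀ (j : Fin n) (ξ : X ⧸ U), ∑ i, lbar i (a i j • ξ) = 0 := by
      intro j ξ
      obtain ⟨z, rfl⟩ := Submodule.Quotient.mk_surjective U ξ
      have he : ∀ i, lbar i (a i j • (Submodule.Quotient.mk (p := U) z)) = lam i (a i j • z) := by
        intro i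
        rw [← Submodule.Quotient.mk_smul]
        exact liftRS_mk K Λ U (lam i) _ (a i j • z)
      rw [Finset.sum_congr rfl fun i _ => he i]
      exact horth j z
    apply hlamb
    rw [hsum]
    have h2 : ∀ i, lam i (b i) = lbar i (Submodule.Quotient.mk (p := U) (b i)) :=
      fun i => (liftRS_mk K Λ U (lam i) _ (b i)).symm
    calc ∑ i, lam i (b i)
        = ∑ i, lbar i (∑ j, a i j • (x j ⟨U, hUfd⟩)) := by
          refine Finset.sum_congr rfl fun i _ => ?_
          rw [h2 i, hcoord i]
          rfl
      _ = ∑ i, ∑ j, lbar i (a i j • (x j ⟨U, hUfd⟩)) := by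
          refine Finset.sum_congr rfl fun i _ => ?_
          exact map_sum (lbar i) _ _
      _ = ∑ j, ∑ i, lbar i (a i j • (x j ⟨U, hUfd⟩)) := Finset.sum_comm
      _ = 0 := Finset.sum_eq_zero fun j _ => hmu j _
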